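/- (Grauert–Remmert criterion) Let A be a reduced Noetherian commutative ring whose integral closure Ā in Q(A) is a finite A-module, and let J be a test ideal for A. Then A is integrally closed in Q(A) if and only if A = End_A(J), i.e., if and only if every element x ∈ Q(A) with x·J ⊆ J already lies in A. -/
import Mathlib


set_option synthInstance.maxHeartbeats 1000000
set_option maxHeartbeats 1000000

open scoped nonZeroDivisors

noncomputable section

/-- The conductor of a reduced ring `A` in its integral closure inside `Q(A)`:
`C_A = {a : A | a · Ā ⊆ A}`. -/
def conductorIdeal (A : Type*) [CommRing A] : Ideal A where
  carrier := {a : A | ∀ x ∈ integralClosure A (FractionRing A),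
      algebraMap A (FractionRing A) a * x ∈ (algebraMap A (FractionRing A)).range}
  add_mem' := by
    intro a b ha hb x hx
    rw [map_add, add_mul]
    exact add_mem (ha x hx) (hb x hx)
  zero_mem' := by
    intro x hx
    rw [map_zero, zero_mul]
    exact zero_mem _
  smul_mem' := by
    intro c a ha x hx
    obtain ⟨y, hy⟩ := ha x hx
    refine ⟨c * y, ?_⟩
    rw [map_mul, hy, smul_eq_mul, map_mul, mul_assoc]


/-- A test ideal for `A`: an ideal containing a non-zerodivisor, radical, and with
`V(C_A) ⊆ V(J)`. -/
def IsTestIdeal (A : Type*) [CommRing A] (J : Ideal A) : Prop :=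
  (∃ g ∈ J, g ∈ A⁰) ∧ J.IsRadical ∧
    PrimeSpectrum.zeroLocus (conductorIdeal A : Set A) ⊆
      PrimeSpectrum.zeroLocus (J : Set A)

lemma grAux_pow {A Q : Type*} [CommRing A] [CommRing Q] [Algebra A Q]
    (N : Submodule A Q) (x : Q) (φ : Module.End A N)
    (hφ : ∀ n : N, (φ n : Q) = x * n) (k : ℕ) (n : N) :
    ((φ ^ k) n : Q) = x ^ k * n := by
  induction k generalizing n with
  | zero => simp
  | succ k ih =>
    rw [pow_succ, Module.End.mul_apply, ih (φ n), hφ, pow_succ]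
    ring

lemma grAux_aeval {A Q : Type*} [CommRing A] [CommRing Q] [Algebra A Q]
    (N : Submodule A Q) (x : Q) (φ : Module.End A N)
    (hφ : ∀ n : N, (φ n : Q) = x * n) (q : Polynomial A) (n : N) :
    ((Polynomial.aeval φ q) n : Q) = Polynomial.aeval x q * n := by
  induction q using Polynomial.induction_on' with
  | add p r hp hr =>
    simp only [map_add, LinearMap.add_apply, Submodule.coe_add, hp, hr, add_mul]
  | monomial k a =>
    simp only [Polynomial.aeval_monomial]
    rw [Module.End.mul_apply, Module.algebraMap_end_apply, Submodule.coe_smul,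
      grAux_pow N x φ hφ, Algebra.smul_def]
    ring

lemma grAux_integral (A : Type*) [CommRing A] [IsNoetherianRing A]
    (J : Ideal A) (g : A) (hgJ : g ∈ J) (hg : g ∈ A⁰)
    (x : FractionRing A)
    (hx : ∀ j ∈ J, x * algebraMap A (FractionRing A) j ∈
      algebraMap A (FractionRing A) '' J) :
    IsIntegral A x := by
  have hmem : ∀ m ∈ Submodule.map (Algebra.linearMap A (FractionRing A)) J, x * m ∈
      Submodule.map (Algebra.linearMap A (FractionRing A)) J := by
    rintro m ⟨j, hj, rfl⟩
    obtain ⟨c, hcJ, hc⟩ := hx j hj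
    exact ⟨c, hcJ, hc⟩
  set N : Submodule A (FractionRing A) := Submodule.map (Algebra.linearMap A (FractionRing A)) J
    with hN
  have hNfg : N.FG := (IsNoetherian.noetherian J).map _
  haveI : Module.Finite A N := Module.Finite.iff_fg.mpr hNfg
  let φ : Module.End A N := (LinearMap.mulLeft A x).restrict
    (p := N) (q := N) (fun m hm => hmem m hm)
  have hφ : ∀ n : N, (φ n : FractionRing A) = x * n := fun n => rfl
  obtain ⟨p, pmonic, hp⟩ := (Module.End.isIntegral (R := A) (M := N)).isIntegral φ
  rw [← Polynomial.aeval_def] at hp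
  refine ⟨p, pmonic, ?_⟩
  rw [← Polynomial.aeval_def]
  have hgN : algebraMap A (FractionRing A) g ∈ N := ⟨g, hgJ, rfl⟩
  have key := grAux_aeval N x φ hφ p ⟨algebraMap A (FractionRing A) g, hgN⟩
  rw [hp] at key
  simp only [LinearMap.zero_apply, ZeroMemClass.coe_zero] at key
  have hu : IsUnit (algebraMap A (FractionRing A) g) := IsLocalization.map_units _ ⟨g, hg⟩
  exact (hu.mul_left_eq_zero).mp key.symm


/-- **Grauert–Remmert criterion.** Let `A` be a reduced Noetherian ring
whose integral closure `Ā` in `Q(A)` is a finite `A`-module, and let `J` be a test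
ideal for `A`. Then `A` is integrally closed in `Q(A)` if and only if every
`x ∈ Q(A)` with `x·J ⊆ J` lies in (the image of) `A`. -/
theorem grauert_remmert_criterion
    (A : Type*) [CommRing A] [IsReduced A] [IsNoetherianRing A]
    [Module.Finite A (integralClosure A (FractionRing A))]
    (J : Ideal A) (hJ : IsTestIdeal A J) :
    integralClosure A (FractionRing A) = ⊥ ↔
      ∀ x : FractionRing A,
        (∀ j ∈ J, x * algebraMap A (FractionRing A) j ∈
          algebraMap A (FractionRing A) '' J) →
        x ∈ Set.range (algebraMap A (FractionRing A)) := by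
  obtain ⟨⟨g, hgJ, hg⟩, hrad, hV⟩ := hJ
  have alginj : Function.Injective (algebraMap A (FractionRing A)) :=
    IsLocalization.injective (FractionRing A) (le_refl A⁰)
  constructor
  · intro hcl x hx
    have hint : IsIntegral A x := grAux_integral A J g hgJ hg x hx
    have hmem : x ∈ integralClosure A (FractionRing A) := hint
    rw [hcl] at hmem
    exact Algebra.mem_bot.mp hmem
  · intro h
    have hJC : J ≤ (conductorIdeal A).radical :=
      (PrimeSpectrum.zeroLocus_subset_zeroLocus_iff _ _).mp hV
    obtain ⟨n, hn⟩ := Ideal.exists_pow_le_of_le_radical_of_fg hJC (IsNoetherian.noetherian J)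
    rw [eq_bot_iff]
    intro x hx
    rw [Algebra.mem_bot]
    have hxint : IsIntegral A x := hx
    have main : ∀ m : ℕ,
        (∀ j ∈ J ^ m, x * algebraMap A (FractionRing A) j ∈
          Set.range (algebraMap A (FractionRing A))) →
        x ∈ Set.range (algebraMap A (FractionRing A)) := by
      intro m
      induction m with
      | zero =>
        intro hm
        have h1 : (1 : A) ∈ J ^ 0 := by simp [Ideal.one_eq_top]
        simpa using hm 1 h1
      | succ k ih =>
        intro hm
        apply ih
        intro b hb
        have hyint : IsIntegral A (x * algebraMap A (FractionRing A) b) :=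
          hxint.mul isIntegral_algebraMap
        obtain ⟨p, pm, hp⟩ := hyint
        rw [← Polynomial.aeval_def] at hp
        set y := x * algebraMap A (FractionRing A) b with hy
        have hsum : y ^ p.natDegree + ∑ i ∈ Finset.range p.natDegree,
            algebraMap A (FractionRing A) (p.coeff i) * y ^ i = 0 := by
          rw [pm.as_sum] at hp
          simpa [Polynomial.aeval_def, Polynomial.eval₂_finset_sum] using hp
        have hym : y ^ p.natDegree = -∑ i ∈ Finset.range p.natDegree,
            algebraMap A (FractionRing A) (p.coeff i) * y ^ i :=
          eq_neg_of_add_eq_zero_left hsum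
        have hyJ : ∀ j ∈ J, y * algebraMap A (FractionRing A) j ∈
            algebraMap A (FractionRing A) '' J := by
          intro j hj
          have hbj : b * j ∈ J ^ (k + 1) := by
            rw [pow_succ]
            exact Ideal.mul_mem_mul hb hj
          obtain ⟨c, hc⟩ := hm (b * j) hbj
          have hc' : algebraMap A (FractionRing A) c = y * algebraMap A (FractionRing A) j := by
            rw [hc, map_mul, hy]; ring
          refine ⟨c, ?_, hc'⟩
          -- show c ∈ J
          have key : algebraMap A (FractionRing A) (c ^ p.natDegree) =
              algebraMap A (FractionRing A)
                (-(∑ i ∈ Finset.range p.natDegree,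
                  p.coeff i * c ^ i * j ^ (p.natDegree - i))) := by
            rw [map_pow, hc', mul_pow, hym, neg_mul, Finset.sum_mul, map_neg, map_sum]
            congr 1
            refine Finset.sum_congr rfl fun i hi => ?_
            have hij : (algebraMap A (FractionRing A) j) ^ p.natDegree =
                (algebraMap A (FractionRing A) j) ^ i *
                  (algebraMap A (FractionRing A) j) ^ (p.natDegree - i) := by
              rw [← pow_add, Nat.add_sub_cancel' (Finset.mem_range.mp hi).le]
            rw [map_mul, map_mul, map_pow, map_pow, hc', hij]
            ring
          have hcm : c ^ p.natDegree = -(∑ i ∈ Finset.range p.natDegree,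
              p.coeff i * c ^ i * j ^ (p.natDegree - i)) := alginj key
          have hpowJ : c ^ p.natDegree ∈ J := by
            rw [hcm]
            refine neg_mem (Ideal.sum_mem _ fun i hi => ?_)
            have hji : j ^ (p.natDegree - i) ∈ J := by
              have hlt : 0 < p.natDegree - i :=
                Nat.sub_pos_of_lt (Finset.mem_range.mp hi)
              have heq : j ^ (p.natDegree - i) = j ^ (p.natDegree - i - 1) * j := by
                rw [← pow_succ, Nat.sub_add_cancel hlt]
              rw [heq]
              exact Ideal.mul_mem_left _ _ hj
            exact Ideal.mul_mem_left _ _ hji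
          exact hrad ⟨p.natDegree, hpowJ⟩
        exact h y hyJ
    refine main n fun j hj => ?_
    obtain ⟨a, ha⟩ := hn hj x hx
    exact ⟨a, by rw [ha]; ring⟩
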